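/- Let f, g be positive probability densities on ℝ³ in L¹ ∩ L² ∩ L∞ with KL(f‖g) < ∞. Then for every v, ‖(A ∗ (f−g))(v)‖ ≤ C(√(2(‖f‖_∞+‖g‖_∞) KL(f‖g)) + √(2 KL(f‖g))), where A(z) = |z|^{−3}(|z|² I − z⊗z) and C is an absolute constant. -/

import Mathlib

open MeasureTheory Matrix Real
open scoped ENNReal NNReal

local notation "E3" => EuclideanSpace ℝ (Fin 3)

/-- Operator norm of a 3×3 matrix is at most the sum of absolute values of entries. -/
lemma opnorm_le_sum_abs (M : Matrix (Fin 3) (Fin 3) ℝ) :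
    ‖Matrix.toEuclideanCLM (𝕜 := ℝ) M‖ ≤ ∑ i, ∑ j, |M i j| := by
  apply ContinuousLinearMap.opNorm_le_bound _ (by positivity)
  intro x
  have hx : ∀ j, |x j| ≤ ‖x‖ := by
    intro j
    rw [EuclideanSpace.norm_eq]
    have h1 : |x j| = Real.sqrt (|x j| ^ 2) := by
      rw [Real.sqrt_sq (abs_nonneg _)]
    rw [h1]
    apply Real.sqrt_le_sqrt
    rw [sq_abs]
    calc (x j)^2 = ‖x j‖ ^ 2 := by rw [Real.norm_eq_abs, sq_abs]
    _ ≤ ∑ i, ‖x i‖ ^ 2 :=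
      Finset.single_le_sum (f := fun k => ‖x k‖^2) (fun k _ => sq_nonneg _) (Finset.mem_univ j)
  have hy : ∀ i, |(Matrix.toEuclideanCLM (𝕜 := ℝ) M x) i| ≤ (∑ j, |M i j|) * ‖x‖ := by
    intro i
    have he : (Matrix.toEuclideanCLM (𝕜 := ℝ) M x) i = ∑ j, M i j * x j := by
      rfl
    rw [he]
    calc |∑ j, M i j * x j| ≤ ∑ j, |M i j * x j| := Finset.abs_sum_le_sum_abs _ _
    _ ≤ ∑ j, |M i j| * ‖x‖ := by
        apply Finset.sum_le_sum
        intro j _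
        rw [abs_mul]
        exact mul_le_mul_of_nonneg_left (hx j) (abs_nonneg _)
    _ = (∑ j, |M i j|) * ‖x‖ := by rw [Finset.sum_mul]
  rw [EuclideanSpace.norm_eq]
  have hb : ∀ i : Fin 3, (0:ℝ) ≤ (∑ j, |M i j|) * ‖x‖ :=
    fun i => mul_nonneg (Finset.sum_nonneg fun j _ => abs_nonneg _) (norm_nonneg _)
  calc Real.sqrt (∑ i, ‖(Matrix.toEuclideanCLM (𝕜 := ℝ) M x) i‖ ^ 2)
      ≤ Real.sqrt ((∑ i, (∑ j, |M i j|) * ‖x‖) ^ 2) := by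
        apply Real.sqrt_le_sqrt
        rw [Fin.sum_univ_three, Fin.sum_univ_three (f := fun i => (∑ j, |M i j|) * ‖x‖)]
        have h0 := hy 0; have h1 := hy 1; have h2 := hy 2
        have b0 := hb 0; have b1 := hb 1; have b2 := hb 2
        simp only [Real.norm_eq_abs]
        nlinarith [abs_nonneg ((Matrix.toEuclideanCLM (𝕜 := ℝ) M x) 0),
          abs_nonneg ((Matrix.toEuclideanCLM (𝕜 := ℝ) M x) 1),
          abs_nonneg ((Matrix.toEuclideanCLM (𝕜 := ℝ) M x) 2),
          sq_abs ((Matrix.toEuclideanCLM (𝕜 := ℝ) M x) 0),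
          sq_abs ((Matrix.toEuclideanCLM (𝕜 := ℝ) M x) 1),
          sq_abs ((Matrix.toEuclideanCLM (𝕜 := ℝ) M x) 2)]
    _ = ∑ i : Fin 3, (∑ j, |M i j|) * ‖x‖ := Real.sqrt_sq (Finset.sum_nonneg fun i _ => hb i)
    _ = (∑ i, ∑ j, |M i j|) * ‖x‖ := by rw [Finset.sum_mul]

/-- Entrywise bound for the Coulomb kernel: each entry of `A(z)` is at most `2|z|^{-1}`. -/
lemma kernel_bound (z : EuclideanSpace ℝ (Fin 3)) (i j : Fin 3) :
    |‖z‖ ^ (-3 : ℝ) * (‖z‖ ^ 2 * (if i = j then (1:ℝ) else 0) - z i * z j)|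
      ≤ 2 * ‖z‖ ^ (-1 : ℝ) := by
  rcases eq_or_ne z 0 with rfl | hz
  · simp [Real.zero_rpow]
  · have hz' : (0:ℝ) < ‖z‖ := norm_pos_iff.2 hz
    have hzi : |z i| ≤ ‖z‖ := by
      rw [EuclideanSpace.norm_eq]
      rw [show |z i| = Real.sqrt (|z i|^2) by rw [Real.sqrt_sq (abs_nonneg _)]]
      apply Real.sqrt_le_sqrt
      rw [sq_abs]
      calc (z i)^2 = ‖z i‖ ^ 2 := by rw [Real.norm_eq_abs, sq_abs]
      _ ≤ ∑ k, ‖z k‖ ^ 2 :=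
        Finset.single_le_sum (f := fun k => ‖z k‖^2) (fun k _ => sq_nonneg _) (Finset.mem_univ i)
    have hzj : |z j| ≤ ‖z‖ := by
      rw [EuclideanSpace.norm_eq]
      rw [show |z j| = Real.sqrt (|z j|^2) by rw [Real.sqrt_sq (abs_nonneg _)]]
      apply Real.sqrt_le_sqrt
      rw [sq_abs]
      calc (z j)^2 = ‖z j‖ ^ 2 := by rw [Real.norm_eq_abs, sq_abs]
      _ ≤ ∑ k, ‖z k‖ ^ 2 :=
        Finset.single_le_sum (f := fun k => ‖z k‖^2) (fun k _ => sq_nonneg _) (Finset.mem_univ j)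
    have habs : |‖z‖ ^ 2 * (if i = j then (1:ℝ) else 0) - z i * z j| ≤ 2 * ‖z‖ ^ 2 := by
      have h1 : |‖z‖ ^ 2 * (if i = j then (1:ℝ) else 0)| ≤ ‖z‖ ^ 2 := by
        split <;> simp [abs_of_nonneg (sq_nonneg ‖z‖)]
      have h2 : |z i * z j| ≤ ‖z‖ ^ 2 := by
        rw [abs_mul]
        calc |z i| * |z j| ≤ ‖z‖ * ‖z‖ :=
          mul_le_mul hzi hzj (abs_nonneg _) (norm_nonneg _)
        _ = ‖z‖ ^ 2 := (sq ‖z‖).symm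
      calc |‖z‖ ^ 2 * (if i = j then (1:ℝ) else 0) - z i * z j|
          ≤ |‖z‖ ^ 2 * (if i = j then (1:ℝ) else 0)| + |z i * z j| := abs_sub _ _
      _ ≤ 2 * ‖z‖ ^ 2 := by linarith
    rw [abs_mul, abs_of_nonneg (Real.rpow_nonneg (norm_nonneg z) _)]
    calc ‖z‖ ^ (-3:ℝ) * |‖z‖ ^ 2 * (if i = j then (1:ℝ) else 0) - z i * z j|
        ≤ ‖z‖ ^ (-3:ℝ) * (2 * ‖z‖ ^ 2) :=
          mul_le_mul_of_nonneg_left habs (Real.rpow_nonneg (norm_nonneg z) _)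
    _ = 2 * ‖z‖ ^ (-1:ℝ) := by
        rw [mul_comm (‖z‖ ^ (-3:ℝ)), mul_assoc, ← Real.rpow_natCast ‖z‖ 2,
          ← Real.rpow_add hz']
        norm_num

/-- `|z|^{-2}` is integrable on the unit ball of `ℝ³`. -/
lemma integrableOn_inv_sq_ball :
    IntegrableOn (fun z : E3 => ‖z‖ ^ (-2 : ℝ)) (Metric.ball 0 1) volume := by
  constructor
  · exact (measurable_norm.pow_const _).aestronglyMeasurable
  · rw [hasFiniteIntegral_def]
    set V := volume (Metric.ball (0:E3) 1) with hV
    have hVfin : V < ⊤ := measure_ball_lt_top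
    set A : ℕ → Set E3 := fun n =>
      Metric.ball (0:E3) ((1/2)^n) \ Metric.ball (0:E3) ((1/2)^(n+1)) with hA
    have hcover : Metric.ball (0:E3) 1 ⊆ {(0:E3)} ∪ ⋃ n, A n := by
      intro z hz
      rcases eq_or_ne z 0 with rfl | hz0
      · exact Or.inl rfl
      · right
        have hz1 : ‖z‖ < 1 := by rwa [Metric.mem_ball, dist_zero_right] at hz
        have hz0' : 0 < ‖z‖ := norm_pos_iff.2 hz0
        have hex : ∃ n, (1/2:ℝ)^n ≤ ‖z‖ := by
          obtain ⟨n, hn⟩ := exists_pow_lt_of_lt_one hz0' (by norm_num : (1/2:ℝ) < 1)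
          exact ⟨n, hn.le⟩
        classical
        set N := Nat.find hex with hN
        have hNspec : (1/2:ℝ)^N ≤ ‖z‖ := Nat.find_spec hex
        have hNpos : 0 < N := by
          rcases Nat.eq_zero_or_pos N with h0 | h
          · exfalso; rw [h0] at hNspec; simp at hNspec; linarith
          · exact h
        refine Set.mem_iUnion.2 ⟨N - 1, ?_, ?_⟩
        · rw [Metric.mem_ball, dist_zero_right]
          have := Nat.find_min hex (m := N - 1) (by omega)
          push_neg at this
          exact this
        · rw [Metric.mem_ball, dist_zero_right, not_lt]
          have : N - 1 + 1 = N := by omega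
          rw [this]
          exact hNspec
    have hterm : ∀ n : ℕ, (∫⁻ z in A n, ‖(‖z‖ ^ (-2:ℝ))‖₊)
        ≤ ENNReal.ofReal (4 * (1/2:ℝ)^n) * V := by
      intro n
      have hpt : ∀ z ∈ A n, (‖(‖z‖ ^ (-2:ℝ))‖₊ : ℝ≥0∞) ≤ ENNReal.ofReal ((4:ℝ)^(n+1)) := by
        intro z hz
        have hzlb : (1/2:ℝ)^(n+1) ≤ ‖z‖ := by
          have := hz.2
          rw [Metric.mem_ball, dist_zero_right, not_lt] at this
          exact this
        have hzpos : (0:ℝ) < (1/2:ℝ)^(n+1) := by positivity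
        have hle : ‖z‖ ^ (-2:ℝ) ≤ ((1/2:ℝ)^(n+1)) ^ (-2:ℝ) :=
          Real.rpow_le_rpow_of_nonpos hzpos hzlb (by norm_num)
        have hcalc : ((1/2:ℝ)^(n+1)) ^ (-2:ℝ) = (4:ℝ)^(n+1) := by
          have hx : (0:ℝ) < (1/2:ℝ)^(n+1) := by positivity
          rw [show (-2:ℝ) = -((2:ℕ):ℝ) by norm_num, Real.rpow_neg hx.le, Real.rpow_natCast]
          rw [pow_right_comm, ← inv_pow]
          norm_num
        rw [← enorm_eq_nnnorm, ← ofReal_norm, Real.norm_eq_abs,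
          abs_of_nonneg (Real.rpow_nonneg (norm_nonneg _) _)]
        exact ENNReal.ofReal_le_ofReal (hcalc ▸ hle)
      calc (∫⁻ z in A n, ‖(‖z‖ ^ (-2:ℝ))‖₊)
          ≤ ∫⁻ _ in A n, ENNReal.ofReal ((4:ℝ)^(n+1)) := setLIntegral_mono measurable_const hpt
        _ = ENNReal.ofReal ((4:ℝ)^(n+1)) * volume (A n) := setLIntegral_const _ _
        _ ≤ ENNReal.ofReal ((4:ℝ)^(n+1)) * volume (Metric.ball (0:E3) ((1/2:ℝ)^n)) := by
            gcongr
            exact Set.diff_subset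
        _ = ENNReal.ofReal ((4:ℝ)^(n+1)) * (ENNReal.ofReal (((1/2:ℝ)^n) ^ 3) * V) := by
            rw [Measure.addHaar_ball volume (0:E3) (by positivity : (0:ℝ) ≤ (1/2:ℝ)^n)]
            congr 2
            simp [finrank_euclideanSpace_fin]
        _ = ENNReal.ofReal ((4:ℝ)^(n+1) * ((1/2:ℝ)^n) ^ 3) * V := by
            rw [ENNReal.ofReal_mul (by positivity), mul_assoc]
        _ = ENNReal.ofReal (4 * (1/2:ℝ)^n) * V := by
            congr 2
            calc (4:ℝ)^(n+1) * ((1/2:ℝ)^n)^3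
                = 4 * ((4:ℝ)^n * ((1/2:ℝ)^3)^n) := by rw [pow_right_comm]; ring
              _ = 4 * ((4 * (1/2:ℝ)^3))^n := by rw [← mul_pow]
              _ = 4 * (1/2:ℝ)^n := by norm_num
    have hgeo : (∑' n : ℕ, ENNReal.ofReal (4 * (1/2:ℝ)^n)) = 8 := by
      have heq : ∀ n : ℕ, ENNReal.ofReal (4 * (1/2:ℝ)^n) = 4 * (2⁻¹ : ℝ≥0∞)^n := by
        intro n
        rw [ENNReal.ofReal_mul (by norm_num), ENNReal.ofReal_pow (by norm_num)]
        norm_num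
        rw [one_div, ENNReal.ofReal_inv_of_pos (by norm_num)]
        norm_num
      calc (∑' n : ℕ, ENNReal.ofReal (4 * (1/2:ℝ)^n)) = ∑' n : ℕ, 4 * (2⁻¹ : ℝ≥0∞)^n := by
            exact tsum_congr heq
        _ = 4 * ∑' n : ℕ, (2⁻¹ : ℝ≥0∞)^n := ENNReal.tsum_mul_left
        _ = 4 * (1 - 2⁻¹)⁻¹ := by rw [ENNReal.tsum_geometric]
        _ = 8 := by
            rw [show (1 - 2⁻¹ : ℝ≥0∞) = 2⁻¹ by
              rw [ENNReal.sub_eq_of_eq_add (by norm_num)]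
              rw [ENNReal.inv_two_add_inv_two]]
            rw [inv_inv]
            norm_num
    calc ∫⁻ z in Metric.ball (0:E3) 1, ‖(‖z‖ ^ (-2:ℝ))‖₊
        ≤ ∫⁻ z in ({(0:E3)} ∪ ⋃ n, A n), ‖(‖z‖ ^ (-2:ℝ))‖₊ := lintegral_mono_set hcover
      _ ≤ (∫⁻ z in ({(0:E3)} : Set E3), ‖(‖z‖ ^ (-2:ℝ))‖₊)
            + ∫⁻ z in (⋃ n, A n), ‖(‖z‖ ^ (-2:ℝ))‖₊ := lintegral_union_le _ _ _
      _ ≤ 0 + ∑' n, ∫⁻ z in A n, ‖(‖z‖ ^ (-2:ℝ))‖₊ := by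
          gcongr
          · exact le_of_eq (setLIntegral_measure_zero _ _ (measure_singleton 0))
          · exact lintegral_iUnion_le _ _
      _ ≤ 0 + ∑' n, ENNReal.ofReal (4 * (1/2:ℝ)^n) * V := by
          gcongr with n
          exact hterm n
      _ = (∑' n, ENNReal.ofReal (4 * (1/2:ℝ)^n)) * V := by rw [zero_add, ENNReal.tsum_mul_right]
      _ ≤ 8 * V := mul_le_mul_left (le_of_eq hgeo) V
      _ < ⊤ := ENNReal.mul_lt_top (by norm_num) hVfin

/-- Pointwise entropy inequality: `(√a − √b)² ≤ a log(a/b) − a + b`. -/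
lemma entropy_pointwise {a b : ℝ} (ha : 0 < a) (hb : 0 < b) :
    (Real.sqrt a - Real.sqrt b) ^ 2 ≤ a * Real.log (a / b) - a + b := by
  have hsa : (0:ℝ) < Real.sqrt a := Real.sqrt_pos.2 ha
  have hsb : (0:ℝ) < Real.sqrt b := Real.sqrt_pos.2 hb
  set u : ℝ := Real.sqrt b / Real.sqrt a with hu
  have hu0 : 0 < u := div_pos hsb hsa
  have hlog : Real.log u ≤ u - 1 := Real.log_le_sub_one_of_pos hu0
  have hlu : Real.log (a / b) = -2 * Real.log u := by
    rw [hu, Real.log_div hsb.ne' hsa.ne', Real.log_sqrt ha.le, Real.log_sqrt hb.le,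
      Real.log_div ha.ne' hb.ne']
    ring
  have hsa2 : Real.sqrt a ^ 2 = a := Real.sq_sqrt ha.le
  have hsb2 : Real.sqrt b ^ 2 = b := Real.sq_sqrt hb.le
  have hab : Real.sqrt a * Real.sqrt b = a * u := by
    rw [hu, mul_div_assoc', eq_div_iff hsa.ne']
    linear_combination Real.sqrt b * hsa2
  rw [hlu]
  nlinarith [mul_le_mul_of_nonneg_left hlog ha.le, hsa2, hsb2]

/-- Both Pinsker inequalities (`L¹` and `L²` versions) for positive probability densities. -/
lemma pinsker_package (f g : E3 → ℝ) (hfm : Measurable f) (hgm : Measurable g)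
    (hfp : ∀ v, 0 < f v) (hgp : ∀ v, 0 < g v)
    (hf1 : ∫ v, f v = 1) (hg1 : ∫ v, g v = 1)
    (hfL1 : MemLp f 1 volume) (hfLi : MemLp f ⊤ volume)
    (hgL1 : MemLp g 1 volume) (hgLi : MemLp g ⊤ volume)
    (hKL : Integrable (fun v => f v * Real.log (f v / g v))) :
    0 ≤ (∫ u, f u * Real.log (f u / g u)) ∧
    (∫ u, |f u - g u|) ≤ 2 * Real.sqrt (∫ u, f u * Real.log (f u / g u)) ∧
    (∫ u, (f u - g u)^2) ≤
      2 * ((eLpNorm f ⊤ volume).toReal + (eLpNorm g ⊤ volume).toReal)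
        * (∫ u, f u * Real.log (f u / g u)) := by
  set KL := (∫ u, f u * Real.log (f u / g u)) with hKLdef
  have hfi : Integrable f := memLp_one_iff_integrable.1 hfL1
  have hgi : Integrable g := memLp_one_iff_integrable.1 hgL1
  set h : E3 → ℝ := fun v => f v * Real.log (f v / g v) - f v + g v with hh
  have hint : Integrable h := (hKL.sub hfi).add hgi
  have hqle : ∀ v, (Real.sqrt (f v) - Real.sqrt (g v)) ^ 2 ≤ h v :=
    fun v => entropy_pointwise (hfp v) (hgp v)
  have hh0 : ∀ v, 0 ≤ h v := fun v => le_trans (sq_nonneg _) (hqle v)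
  have hInth : ∫ v, h v = KL := by
    have e1 : ∫ v, (f v * Real.log (f v / g v) - f v + g v) =
        (∫ v, (f v * Real.log (f v / g v) - f v)) + ∫ v, g v :=
      integral_add (hKL.sub hfi) hgi
    have e2 : ∫ v, (f v * Real.log (f v / g v) - f v) = KL - 1 := by
      rw [integral_sub hKL hfi, hf1, hKLdef]
    show ∫ v, (f v * Real.log (f v / g v) - f v + g v) = KL
    rw [e1, e2, hg1]; ring
  have hKL0 : 0 ≤ KL := by
    rw [← hInth]; exact integral_nonneg hh0
  set q : E3 → ℝ := fun v => (Real.sqrt (f v) - Real.sqrt (g v)) ^ 2 with hq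
  have hqm : Measurable q := ((hfm.sqrt.sub hgm.sqrt).pow_const 2)
  have hqint : Integrable q := by
    apply hint.mono' hqm.aestronglyMeasurable
    filter_upwards with v
    rw [Real.norm_eq_abs, abs_of_nonneg (sq_nonneg _)]
    exact hqle v
  have hIntq : ∫ v, q v ≤ KL := by
    rw [← hInth]
    exact integral_mono hqint hint hqle
  have hIntq0 : 0 ≤ ∫ v, q v := integral_nonneg fun v => sq_nonneg _
  set Sf := (eLpNorm f ⊤ volume).toReal with hSf
  set Sg := (eLpNorm g ⊤ volume).toReal with hSg
  have hfae : ∀ᵐ v, f v ≤ Sf := by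
    filter_upwards [enorm_ae_le_eLpNormEssSup f volume] with v hv
    have hfin : eLpNormEssSup f volume ≠ ⊤ := by
      rw [← eLpNorm_exponent_top]; exact hfLi.2.ne
    have h2 : ‖f v‖ ≤ (eLpNormEssSup f volume).toReal := by
      have h3 := ENNReal.toReal_mono hfin hv
      simpa using h3
    calc f v ≤ ‖f v‖ := le_abs_self _
      _ ≤ (eLpNormEssSup f volume).toReal := h2
      _ = Sf := by rw [hSf, eLpNorm_exponent_top]
  have hgae : ∀ᵐ v, g v ≤ Sg := by
    filter_upwards [enorm_ae_le_eLpNormEssSup g volume] with v hv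
    have hfin : eLpNormEssSup g volume ≠ ⊤ := by
      rw [← eLpNorm_exponent_top]; exact hgLi.2.ne
    have h2 : ‖g v‖ ≤ (eLpNormEssSup g volume).toReal := by
      have h3 := ENNReal.toReal_mono hfin hv
      simpa using h3
    calc g v ≤ ‖g v‖ := le_abs_self _
      _ ≤ (eLpNormEssSup g volume).toReal := h2
      _ = Sg := by rw [hSg, eLpNorm_exponent_top]
  refine ⟨hKL0, ?_, ?_⟩
  · -- L¹ Pinsker
    set F : E3 → ℝ := fun v => |Real.sqrt (f v) - Real.sqrt (g v)| with hF
    set G : E3 → ℝ := fun v => Real.sqrt (f v) + Real.sqrt (g v) with hG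
    have hFm : Measurable F := (hfm.sqrt.sub hgm.sqrt).abs
    have hGm : Measurable G := hfm.sqrt.add hgm.sqrt
    have hFsq : (fun v => F v ^ 2) = q := by
      funext v; simp [hF, hq, sq_abs]
    have hF2 : MemLp F 2 volume := by
      rw [memLp_two_iff_integrable_sq hFm.aestronglyMeasurable, hFsq]
      exact hqint
    have hG2ptwise : ∀ v, G v ^ 2 ≤ 2 * (f v + g v) := by
      intro v
      have h1 : Real.sqrt (f v) ^ 2 = f v := Real.sq_sqrt (hfp v).le
      have h2 : Real.sqrt (g v) ^ 2 = g v := Real.sq_sqrt (hgp v).le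
      simp only [hG]
      nlinarith [sq_nonneg (Real.sqrt (f v) - Real.sqrt (g v))]
    have hG2int : Integrable (fun v => G v ^ 2) := by
      apply ((hfi.add hgi).const_mul 2).mono' ((hGm.pow_const 2).aestronglyMeasurable)
      filter_upwards with v
      rw [Real.norm_eq_abs, abs_of_nonneg (sq_nonneg _)]
      exact hG2ptwise v
    have hG2 : MemLp G 2 volume :=
      (memLp_two_iff_integrable_sq hGm.aestronglyMeasurable).2 hG2int
    have hIntG2 : ∫ v, G v ^ 2 ≤ 4 := by
      calc ∫ v, G v ^ 2 ≤ ∫ v, 2 * (f v + g v) :=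
            integral_mono hG2int ((hfi.add hgi).const_mul 2) hG2ptwise
        _ = 2 * ((∫ v, f v) + ∫ v, g v) := by
            rw [integral_const_mul, integral_add hfi hgi]
        _ = 4 := by rw [hf1, hg1]; norm_num
    have hconj : Real.HolderConjugate 2 2 := Real.HolderConjugate.two_two
    have holder := integral_mul_le_Lp_mul_Lq_of_nonneg hconj
      (Filter.Eventually.of_forall fun v => abs_nonneg _)
      (Filter.Eventually.of_forall fun v =>
        add_nonneg (Real.sqrt_nonneg _) (Real.sqrt_nonneg _))
      (by rw [ENNReal.ofReal_ofNat]; exact hF2)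
      (by rw [ENNReal.ofReal_ofNat]; exact hG2)
    have heq : (fun v => |f v - g v|) = fun v => F v * G v := by
      funext v
      have h1 : Real.sqrt (f v) ^ 2 = f v := Real.sq_sqrt (hfp v).le
      have h2 : Real.sqrt (g v) ^ 2 = g v := Real.sq_sqrt (hgp v).le
      have hs0 : 0 ≤ Real.sqrt (f v) := Real.sqrt_nonneg _
      have ht0 : 0 ≤ Real.sqrt (g v) := Real.sqrt_nonneg _
      simp only [hF, hG]
      generalize hgen1 : Real.sqrt (f v) = s at h1 hs0 ⊢
      generalize hgen2 : Real.sqrt (g v) = t at h2 ht0 ⊢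
      rw [← h1, ← h2, show s ^ 2 - t ^ 2 = (s - t) * (s + t) by ring,
        abs_mul, abs_of_nonneg (add_nonneg hs0 ht0)]
    have hrpow : ∀ (φ : E3 → ℝ), (∫ v, φ v ^ (2:ℝ)) = ∫ v, φ v ^ 2 := by
      intro φ
      congr 1
      funext v
      rw [show (2:ℝ) = ((2:ℕ):ℝ) by norm_num, Real.rpow_natCast]
    calc ∫ v, |f v - g v| = ∫ v, F v * G v := by rw [heq]
      _ ≤ (∫ v, F v ^ (2:ℝ)) ^ ((1:ℝ)/2) * (∫ v, G v ^ (2:ℝ)) ^ ((1:ℝ)/2) := holder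
      _ = Real.sqrt (∫ v, q v) * Real.sqrt (∫ v, G v ^ 2) := by
          rw [hrpow F, hrpow G, hFsq, ← Real.sqrt_eq_rpow, ← Real.sqrt_eq_rpow]
      _ ≤ Real.sqrt KL * Real.sqrt 4 := by
          apply mul_le_mul (Real.sqrt_le_sqrt hIntq) (Real.sqrt_le_sqrt hIntG2)
            (Real.sqrt_nonneg _) (Real.sqrt_nonneg _)
      _ = 2 * Real.sqrt KL := by
          rw [show (4:ℝ) = 2^2 by norm_num, Real.sqrt_sq (by norm_num : (0:ℝ) ≤ 2)]
          ring
  · -- L² Pinsker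
    have hptL2 : ∀ᵐ v, (f v - g v)^2 ≤ 2*(Sf+Sg) * q v := by
      filter_upwards [hfae, hgae] with v hfv hgv
      have h1 : Real.sqrt (f v) ^ 2 = f v := Real.sq_sqrt (hfp v).le
      have h2 : Real.sqrt (g v) ^ 2 = g v := Real.sq_sqrt (hgp v).le
      have hqv : q v = (Real.sqrt (f v) - Real.sqrt (g v)) ^ 2 := rfl
      have hsum : (Real.sqrt (f v) + Real.sqrt (g v))^2 ≤ 2*(Sf+Sg) := by
        nlinarith [sq_nonneg (Real.sqrt (f v) - Real.sqrt (g v))]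
      have hid : (f v - g v)^2
          = (Real.sqrt (f v) - Real.sqrt (g v))^2 * (Real.sqrt (f v) + Real.sqrt (g v))^2 := by
        generalize hgen1 : Real.sqrt (f v) = s at h1 ⊢
        generalize hgen2 : Real.sqrt (g v) = t at h2 ⊢
        rw [← h1, ← h2]; ring
      rw [hid, hqv]
      nlinarith [sq_nonneg (Real.sqrt (f v) - Real.sqrt (g v)),
        mul_le_mul_of_nonneg_left hsum (sq_nonneg (Real.sqrt (f v) - Real.sqrt (g v)))]
    have hS0 : (0:ℝ) ≤ Sf + Sg := add_nonneg ENNReal.toReal_nonneg ENNReal.toReal_nonneg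
    calc ∫ v, (f v - g v)^2 ≤ ∫ v, 2*(Sf+Sg) * q v :=
          integral_mono_of_nonneg (Filter.Eventually.of_forall fun v => sq_nonneg _)
            (hqint.const_mul _) hptL2
      _ = 2*(Sf+Sg) * ∫ v, q v := integral_const_mul _ _
      _ ≤ 2*(Sf+Sg) * KL := mul_le_mul_of_nonneg_left hIntq (by linarith)

/-- Pointwise bound on `A ∗ (f − g)` in terms of relative entropy, via Pinsker's
inequalities, for the Coulomb collision kernel `A(z) = |z|^{−3}(|z|² I − z⊗z)`. -/
theorem conv_A_bound_by_KL :
    ∃ C : ℝ, 0 < C ∧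
      ∀ (f g : EuclideanSpace ℝ (Fin 3) → ℝ),
        Measurable f → Measurable g →
        (∀ v, 0 < f v) → (∀ v, 0 < g v) →
        (∫ v, f v = 1) → (∫ v, g v = 1) →
        MemLp f 1 volume → MemLp f 2 volume → MemLp f ⊤ volume →
        MemLp g 1 volume → MemLp g 2 volume → MemLp g ⊤ volume →
        Integrable (fun v => f v * Real.log (f v / g v)) →
        ∀ (v : EuclideanSpace ℝ (Fin 3)) (M : Matrix (Fin 3) (Fin 3) ℝ),
          (∀ i j, M i j = ∫ w : EuclideanSpace ℝ (Fin 3),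
              (‖v - w‖ ^ (-3 : ℝ) *
                (‖v - w‖ ^ 2 * (if i = j then 1 else 0) - (v - w) i * (v - w) j)) *
                (f w - g w)) →
          ‖Matrix.toEuclideanCLM (𝕜 := ℝ) M‖ ≤
            C * (Real.sqrt (2 * ((eLpNorm f ⊤ volume).toReal + (eLpNorm g ⊤ volume).toReal) *
                    ∫ u, f u * Real.log (f u / g u)) +
                 Real.sqrt (2 * ∫ u, f u * Real.log (f u / g u))) := by
  classical
  set F0 : E3 → ℝ := Set.indicator (Metric.ball (0:E3) 1) (fun z => ‖z‖ ^ (-2:ℝ)) with hF0def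
  set I2 : ℝ := ∫ z, F0 z with hI2def
  have hF0nonneg : ∀ z, 0 ≤ F0 z :=
    fun z => Set.indicator_nonneg (fun z _ => Real.rpow_nonneg (norm_nonneg _) _) _
  have hI2nonneg : 0 ≤ I2 := integral_nonneg hF0nonneg
  have hF0int : Integrable F0 :=
    integrableOn_inv_sq_ball.integrable_indicator Metric.isOpen_ball.measurableSet
  refine ⟨18 * Real.sqrt I2 + 37, by positivity, ?_⟩
  intro f g hfm hgm hfp hgp hf1 hg1 hfL1 hfL2 hfLi hgL1 hgL2 hgLi hKL v M hM
  obtain ⟨hKL0, hL1, hL2⟩ := pinsker_package f g hfm hgm hfp hgp hf1 hg1 hfL1 hfLi hgL1 hgLi hKL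
  set KL := ∫ u, f u * Real.log (f u / g u) with hKLdef
  set S := (eLpNorm f ⊤ volume).toReal + (eLpNorm g ⊤ volume).toReal with hSdef
  have hS0 : 0 ≤ S := add_nonneg ENNReal.toReal_nonneg ENNReal.toReal_nonneg
  have hfi : Integrable f := memLp_one_iff_integrable.1 hfL1
  have hgi : Integrable g := memLp_one_iff_integrable.1 hgL1
  have habs : Integrable (fun w => |f w - g w|) := (hfi.sub hgi).abs
  set K : E3 → ℝ := Set.indicator (Metric.ball v 1) (fun w => ‖v - w‖ ^ (-1:ℝ)) with hKdef
  have hKm : Measurable K :=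
    (((measurable_const.sub measurable_id).norm).pow_const (-1:ℝ)).indicator
      Metric.isOpen_ball.measurableSet
  have hK0 : ∀ w, 0 ≤ K w :=
    fun w => Set.indicator_nonneg (fun w _ => Real.rpow_nonneg (norm_nonneg _) _) _
  have hmem_iff : ∀ w : E3, w ∈ Metric.ball v 1 ↔ v - w ∈ Metric.ball (0:E3) 1 := by
    intro w
    rw [Metric.mem_ball, mem_ball_zero_iff, dist_eq_norm, norm_sub_rev]
  have hKsq : ∀ w, K w ^ 2 = F0 (v - w) := by
    intro w
    by_cases hw : w ∈ Metric.ball v 1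
    · have hw' : v - w ∈ Metric.ball (0:E3) 1 := (hmem_iff w).1 hw
      rw [hKdef, hF0def, Set.indicator_of_mem hw, Set.indicator_of_mem hw']
      rw [← Real.rpow_natCast (‖v - w‖ ^ (-1:ℝ)) 2, ← Real.rpow_mul (norm_nonneg _)]
      norm_num
    · have hw' : v - w ∉ Metric.ball (0:E3) 1 := fun hc => hw ((hmem_iff w).2 hc)
      rw [hKdef, hF0def, Set.indicator_of_notMem hw, Set.indicator_of_notMem hw']
      norm_num
  have hK2 : MemLp K 2 volume := by
    rw [memLp_two_iff_integrable_sq hKm.aestronglyMeasurable]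
    have he : (fun w => K w ^ 2) = fun w => F0 (v - w) := funext hKsq
    rw [he]
    exact hF0int.comp_sub_left v
  have hIntK2 : ∫ w, K w ^ 2 = I2 := by
    calc ∫ w, K w ^ 2 = ∫ w, F0 (v - w) := by
          congr 1; exact funext hKsq
      _ = ∫ z, F0 z := integral_sub_left_eq_self F0 volume v
      _ = I2 := hI2def.symm
  have habs2 : MemLp (fun w => |f w - g w|) 2 volume := (hfL2.sub hgL2).abs
  have hdiv : (1:ℝ≥0∞)/1 = 1/2 + 1/2 := by
    rw [ENNReal.div_add_div_same, one_add_one_eq_two,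
      ENNReal.div_self two_ne_zero ENNReal.ofNat_ne_top, div_one]
  have hprod_int : Integrable (fun w => K w * |f w - g w|) :=
    memLp_one_iff_integrable.1 (habs2.smul hK2 (hpqr := ⟨by rw [inv_one]; exact ENNReal.inv_two_add_inv_two⟩))
  -- entrywise bound
  have hsplit : ∀ i j, |M i j| ≤ 2 * (∫ w, K w * |f w - g w|) + 2 * (∫ w, |f w - g w|) := by
    intro i j
    rw [hM i j]
    have hptbd : ∀ w, |(‖v - w‖ ^ (-3:ℝ) *
        (‖v - w‖ ^ 2 * (if i = j then (1:ℝ) else 0) - (v - w) i * (v - w) j)) * (f w - g w)|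
        ≤ 2 * (K w * |f w - g w|) + 2 * |f w - g w| := by
      intro w
      rw [abs_mul]
      have hker := kernel_bound (v - w) i j
      have hmul := mul_le_mul_of_nonneg_right hker (abs_nonneg (f w - g w))
      by_cases hw : w ∈ Metric.ball v 1
      · have hKw : K w = ‖v - w‖ ^ (-1:ℝ) := by
          rw [hKdef, Set.indicator_of_mem hw]
        rw [hKw]
        nlinarith [abs_nonneg (f w - g w)]
      · have hKw : K w = 0 := by
          rw [hKdef, Set.indicator_of_notMem hw]
        have hnorm1 : (1:ℝ) ≤ ‖v - w‖ := by
          have := hw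
          rw [Metric.mem_ball, not_lt, dist_eq_norm, norm_sub_rev] at this
          exact this
        have h1le : ‖v - w‖ ^ (-1:ℝ) ≤ 1 :=
          Real.rpow_le_one_of_one_le_of_nonpos hnorm1 (by norm_num)
        rw [hKw]
        nlinarith [abs_nonneg (f w - g w),
          mul_le_mul_of_nonneg_right h1le (abs_nonneg (f w - g w))]
    have hbd_int : Integrable (fun w => 2 * (K w * |f w - g w|) + 2 * |f w - g w|) :=
      (hprod_int.const_mul 2).add (habs.const_mul 2)
    calc |∫ w, (‖v - w‖ ^ (-3:ℝ) *
        (‖v - w‖ ^ 2 * (if i = j then (1:ℝ) else 0) - (v - w) i * (v - w) j)) * (f w - g w)|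
        ≤ ∫ w, |(‖v - w‖ ^ (-3:ℝ) *
            (‖v - w‖ ^ 2 * (if i = j then (1:ℝ) else 0) - (v - w) i * (v - w) j))
            * (f w - g w)| := by
          have hnorm := norm_integral_le_integral_norm (μ := volume)
            (fun w : E3 => (‖v - w‖ ^ (-3:ℝ) *
              (‖v - w‖ ^ 2 * (if i = j then (1:ℝ) else 0) - (v - w) i * (v - w) j))
              * (f w - g w))
          simp only [Real.norm_eq_abs] at hnorm
          exact hnorm
      _ ≤ ∫ w, (2 * (K w * |f w - g w|) + 2 * |f w - g w|) :=
          integral_mono_of_nonneg (Filter.Eventually.of_forall fun w => abs_nonneg _)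
            hbd_int (Filter.Eventually.of_forall hptbd)
      _ = 2 * (∫ w, K w * |f w - g w|) + 2 * (∫ w, |f w - g w|) := by
          rw [integral_add (hprod_int.const_mul 2) (habs.const_mul 2),
            integral_const_mul, integral_const_mul]
  -- Hölder bound on the near-field term
  have hconj : Real.HolderConjugate 2 2 := Real.HolderConjugate.two_two
  have hrpow : ∀ (φ : E3 → ℝ), (∫ w, φ w ^ (2:ℝ)) = ∫ w, φ w ^ 2 := by
    intro φ
    congr 1
    funext w
    rw [show (2:ℝ) = ((2:ℕ):ℝ) by norm_num, Real.rpow_natCast]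
  have hfg2int : ∫ w, |f w - g w| ^ 2 = ∫ w, (f w - g w) ^ 2 := by
    congr 1; funext w; rw [sq_abs]
  have hHolder : ∫ w, K w * |f w - g w| ≤ Real.sqrt I2 * Real.sqrt (2 * S * KL) := by
    have h := integral_mul_le_Lp_mul_Lq_of_nonneg hconj
      (Filter.Eventually.of_forall hK0)
      (Filter.Eventually.of_forall fun w => abs_nonneg _)
      (by rw [ENNReal.ofReal_ofNat]; exact hK2)
      (by rw [ENNReal.ofReal_ofNat]; exact habs2)
    calc ∫ w, K w * |f w - g w|
        ≤ (∫ w, K w ^ (2:ℝ)) ^ ((1:ℝ)/2) * (∫ w, |f w - g w| ^ (2:ℝ)) ^ ((1:ℝ)/2) := h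
      _ = Real.sqrt I2 * Real.sqrt (∫ w, (f w - g w)^2) := by
          rw [hrpow K, hrpow (fun w => |f w - g w|), hIntK2, hfg2int,
            ← Real.sqrt_eq_rpow, ← Real.sqrt_eq_rpow]
      _ ≤ Real.sqrt I2 * Real.sqrt (2 * S * KL) := by
          apply mul_le_mul_of_nonneg_left _ (Real.sqrt_nonneg _)
          exact Real.sqrt_le_sqrt hL2
  -- final assembly
  have hentry : ∀ i j : Fin 3, |M i j|
      ≤ 2 * (Real.sqrt I2 * Real.sqrt (2 * S * KL)) + 2 * (2 * Real.sqrt KL) := by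
    intro i j
    calc |M i j| ≤ 2 * (∫ w, K w * |f w - g w|) + 2 * (∫ w, |f w - g w|) := hsplit i j
      _ ≤ 2 * (Real.sqrt I2 * Real.sqrt (2 * S * KL)) + 2 * (2 * Real.sqrt KL) := by
          have h1 := hHolder
          have h2 := hL1
          linarith
  calc ‖Matrix.toEuclideanCLM (𝕜 := ℝ) M‖ ≤ ∑ i, ∑ j, |M i j| := opnorm_le_sum_abs M
    _ ≤ ∑ _i : Fin 3, ∑ _j : Fin 3,
          (2 * (Real.sqrt I2 * Real.sqrt (2 * S * KL)) + 2 * (2 * Real.sqrt KL)) := by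
        apply Finset.sum_le_sum
        intro i _
        apply Finset.sum_le_sum
        intro j _
        exact hentry i j
    _ = 9 * (2 * (Real.sqrt I2 * Real.sqrt (2 * S * KL)) + 2 * (2 * Real.sqrt KL)) := by
        simp [Finset.sum_const, Finset.card_univ]
        ring
    _ ≤ (18 * Real.sqrt I2 + 37) * (Real.sqrt (2 * S * KL) + Real.sqrt (2 * KL)) := by
        have h1 : Real.sqrt KL ≤ Real.sqrt (2 * KL) := Real.sqrt_le_sqrt (by linarith)
        have h2 : 0 ≤ Real.sqrt (2 * S * KL) := Real.sqrt_nonneg _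
        have h3 : 0 ≤ Real.sqrt (2 * KL) := Real.sqrt_nonneg _
        have h4 : 0 ≤ Real.sqrt I2 := Real.sqrt_nonneg _
        have h5 : 0 ≤ Real.sqrt KL := Real.sqrt_nonneg _
        nlinarith [mul_nonneg h4 h2, mul_nonneg h4 h3]
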